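/- If k ⊂ K ⊂ L and k ⊂ M are subfields of a field N, and L and M are linearly disjoint over k, then the compositum (K,M) intersected with L equals K. -/
import Mathlib


/-- `L` and `M` are linearly disjoint over `k` inside `N`: any `k`-linearly
independent family in `L` and any `k`-linearly independent family in `M` have
pairwise products linearly independent over `k`. -/
def LinDisjointOver {N : Type*} [Field N] (k L M : Subfield N) : Prop :=
  ∀ (ι κ : Type) (a : ι → N) (b : κ → N),
    (∀ i, a i ∈ L) → (∀ j, b j ∈ M) →
    LinearIndependent k a → LinearIndependent k b →
    LinearIndependent k (fun p : ι × κ => a p.1 * b p.2)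

lemma key_lemma {N : Type*} [Field N] (k L M : Subfield N)
    (hdisj : LinDisjointOver k L M)
    {n : ℕ} (m : Fin n → N) (hm : ∀ i, m i ∈ M) (hmi : LinearIndependent k m)
    (g : Fin n → N) (hg : ∀ i, g i ∈ L)
    (hsum : ∑ i, g i * m i = 0) : ∀ i, g i = 0 := by
  obtain ⟨b, hbs, hbspan, hbli⟩ := exists_linearIndependent k (Set.range g)
  have hbfin : b.Finite := (Set.finite_range g).subset hbs
  haveI := hbfin.fintype
  set r := Fintype.card b with hr
  let e : Fin r ≃ b := (Fintype.equivFin b).symm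
  let a : Fin r → N := fun j => (e j : N)
  have hrange : Set.range a = b := by
    ext x; constructor
    · rintro ⟨j, rfl⟩; exact (e j).2
    · intro hx; exact ⟨e.symm ⟨x, hx⟩, by simp [a]⟩
  have hali : LinearIndependent k a := hbli.comp e e.injective
  have haL : ∀ j, a j ∈ L := by
    intro j
    obtain ⟨i, hi⟩ := hbs (e j).2
    show ((e j : N)) ∈ L
    rw [← hi]; exact hg i
  -- each g i is in span k b = span k (range a)
  have hmem : ∀ i, g i ∈ Submodule.span k (Set.range a) := fun i => by
    rw [hrange, hbspan]; exact Submodule.subset_span ⟨i, rfl⟩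
  choose t ht using fun i => (Submodule.mem_span_range_iff_exists_fun k).mp (hmem i)
  -- products linearly independent
  have hprod := hdisj (Fin r) (Fin n) a m haL hm hali hmi
  have hzero : ∀ p : Fin r × Fin n, t p.2 p.1 = 0 := by
    have := Fintype.linearIndependent_iff.mp hprod (fun p => t p.2 p.1) ?_
    · exact this
    · calc ∑ p : Fin r × Fin n, t p.2 p.1 • (a p.1 * m p.2)
          = ∑ i : Fin n, ∑ j : Fin r, t i j • (a j * m i) := by
            rw [Fintype.sum_prod_type, Finset.sum_comm]
        _ = ∑ i : Fin n, (∑ j : Fin r, t i j • a j) * m i := by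
            congr 1; ext i
            rw [Finset.sum_mul]
            congr 1; ext j
            rw [smul_mul_assoc]
        _ = ∑ i, g i * m i := by
            congr 1; ext i; rw [ht i]
        _ = 0 := hsum
  intro i
  rw [← ht i]
  simp [fun j => hzero (j, i)]

/-- If `k ⊆ K ⊆ L` and `k ⊆ M` are subfields of a field `N`, and `L` and `M` are
linearly disjoint over `k`, then the compositum `(K, M)` intersected with `L`
equals `K`. -/
theorem stmt_8 {N : Type*} [Field N] (k K L M : Subfield N)
    (hkK : k ≤ K) (hKL : K ≤ L) (hkM : k ≤ M)
    (hdisj : LinDisjointOver k L M) :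
    (K ⊔ M) ⊓ L = K := by
  classical
  refine le_antisymm ?_ (le_inf le_sup_left hKL)
  intro x hx
  obtain ⟨hxKM, hxL⟩ := hx
  have hx' : x ∈ Subfield.closure ((K : Set N) ∪ (M : Set N)) := by
    rwa [Subfield.closure_union, Subfield.closure_eq, Subfield.closure_eq]
  obtain ⟨p, hp, q, hq, hpq⟩ := Subfield.mem_closure_iff.mp hx'
  by_cases hq0 : q = 0
  · rw [hq0, div_zero] at hpq
    rw [← hpq]; exact zero_mem K
  -- Subring.closure (K ∪ M) ⊆ span K M
  have hspan : ∀ z ∈ Subring.closure ((K : Set N) ∪ (M : Set N)),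
      z ∈ Submodule.span K (M : Set N) := by
    intro z hz
    induction hz using Subring.closure_induction with
    | mem y hy =>
      rcases hy with hy | hy
      · have : y = (⟨y, hy⟩ : K) • (1 : N) := by
          simp [Subfield.smul_def]
        rw [this]
        exact Submodule.smul_mem _ _ (Submodule.subset_span (one_mem M))
      · exact Submodule.subset_span hy
    | zero => exact zero_mem _
    | one => exact Submodule.subset_span (one_mem M)
    | add _ _ _ _ h1 h2 => exact add_mem h1 h2
    | neg _ _ h1 => exact neg_mem h1
    | mul y z _ _ h1 h2 =>
      have : Submodule.span K (M : Set N) * Submodule.span K (M : Set N)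
          ≤ Submodule.span K (M : Set N) := by
        rw [Submodule.span_mul_span]
        apply Submodule.span_le.mpr
        rintro _ ⟨u, hu, v, hv, rfl⟩
        exact Submodule.subset_span (mul_mem hu hv)
      exact this (Submodule.mul_mem_mul h1 h2)
  have hpm := hspan p hp
  have hqm := hspan q hq
  obtain ⟨cp, hcp, hcps⟩ := Submodule.mem_span_set.mp hpm
  obtain ⟨cq, hcq, hcqs⟩ := Submodule.mem_span_set.mp hqm
  set T : Finset N := cp.support ∪ cq.support with hT
  have hTM : (T : Set N) ⊆ (M : Set N) := by
    rw [hT]; push_cast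
    exact Set.union_subset hcp hcq
  obtain ⟨b, hbs, hbspan, hbli⟩ := exists_linearIndependent k (T : Set N)
  have hbfin : b.Finite := T.finite_toSet.subset hbs
  haveI := hbfin.fintype
  set n := Fintype.card b with hn
  let e : Fin n ≃ b := (Fintype.equivFin b).symm
  let m : Fin n → N := fun j => (e j : N)
  have hrange : Set.range m = b := by
    ext y; constructor
    · rintro ⟨j, rfl⟩; exact (e j).2
    · intro hy; exact ⟨e.symm ⟨y, hy⟩, by simp [m]⟩
  have hmli : LinearIndependent k m := hbli.comp e e.injective
  have hmM : ∀ j, m j ∈ M := fun j => hTM (hbs (e j).2)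
  -- span k b ≤ span K b as sets
  have hkspan : ∀ y ∈ Submodule.span k b, y ∈ Submodule.span K b := by
    intro y hy
    induction hy using Submodule.span_induction with
    | mem y hy => exact Submodule.subset_span hy
    | zero => exact zero_mem _
    | add _ _ _ _ h1 h2 => exact add_mem h1 h2
    | smul c y _ h1 =>
      have : c • y = (⟨(c : N), hkK c.2⟩ : K) • y := by
        simp [Subfield.smul_def]
      rw [this]
      exact Submodule.smul_mem _ _ h1
  have hTspan : (T : Set N) ⊆ (Submodule.span K b : Set N) := by
    intro y hy
    exact hkspan y (hbspan ▸ Submodule.subset_span hy)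
  have hpb : p ∈ Submodule.span K (Set.range m) := by
    rw [hrange]
    rw [← hcps]
    apply Submodule.sum_mem
    intro i hi
    exact Submodule.smul_mem _ _ (hTspan (by simp [hT, hi]))
  have hqb : q ∈ Submodule.span K (Set.range m) := by
    rw [hrange, ← hcqs]
    apply Submodule.sum_mem
    intro i hi
    exact Submodule.smul_mem _ _ (hTspan (by simp [hT, hi]))
  obtain ⟨u, hu⟩ := (Submodule.mem_span_range_iff_exists_fun K).mp hpb
  obtain ⟨v, hv⟩ := (Submodule.mem_span_range_iff_exists_fun K).mp hqb
  -- x * q = p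
  have hxq : x * q = p := by
    rw [← hpq, div_mul_cancel₀ _ hq0]
  have hsum0 : ∑ i, (x * (v i : N) - (u i : N)) * m i = 0 := by
    have : ∑ i, (x * (v i : N) - (u i : N)) * m i
        = x * (∑ i, v i • m i) - (∑ i, u i • m i) := by
      rw [Finset.mul_sum, ← Finset.sum_sub_distrib]
      congr 1; ext i
      simp [Subfield.smul_def]
      ring
    rw [this, hu, hv, hxq, sub_self]
  have hcoefL : ∀ i, x * (v i : N) - (u i : N) ∈ L := fun i =>
    sub_mem (mul_mem hxL (hKL (v i).2)) (hKL (u i).2)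
  have hz := key_lemma k L M hdisj m hmM hmli _ hcoefL hsum0
  have hvx : ∀ i, x * (v i : N) = (u i : N) := fun i => sub_eq_zero.mp (hz i)
  -- some v i ≠ 0
  have : ∃ i, (v i : N) ≠ 0 := by
    by_contra h
    push_neg at h
    apply hq0
    rw [← hv]
    apply Finset.sum_eq_zero
    intro i _
    simp [Subfield.smul_def, h i]
  obtain ⟨i, hvi⟩ := this
  have hxval : x = (u i : N) / (v i : N) := by
    rw [eq_div_iff hvi]; exact hvx i
  rw [hxval]
  exact div_mem (u i).2 (v i).2
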